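/- For 1 < q < 2, if X has density γ_q^(-1)·|x|^((2-q)/(q-1))·e^(-|x|^(q/(q-1))) on ℝ with γ_q = 2(q-1)Γ(1+1/q), then E|X - sgn(X)|² ≤ 9·(1 - 1/q)². -/

import Mathlib

open Real MeasureTheory Set Filter intervalIntegral

lemma exp_two_lt : exp 2 < 8 := by
  have h := exp_one_lt_d9
  have h2 : exp 2 = exp 1 ^ 2 := by
    rw [← Real.exp_nat_mul]; norm_num
  nlinarith [exp_pos 1]

lemma exp_neg_two_lt : exp (-2) < 1/4 := by
  rw [exp_neg]
  rw [show (1:ℝ)/4 = (4:ℝ)⁻¹ by norm_num, inv_lt_inv₀ (exp_pos 2) (by norm_num)]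
  have h2 : exp 2 = exp 1 ^ 2 := by rw [← Real.exp_nat_mul]; norm_num
  nlinarith [exp_one_gt_d9]

lemma phi_nonneg {s : ℝ} (h1 : exp (-2) ≤ s) (h2 : s ≤ 1) :
    s⁻¹ - s ^ 3 ≤ -(4 * log s) := by
  have hs0 : (0:ℝ) < s := lt_of_lt_of_le (exp_pos _) h1
  set φ : ℝ → ℝ := fun x => -(4 * log x) - x⁻¹ + x ^ 3 with hφ
  suffices h : 0 ≤ φ s by
    simp only [hφ] at h; linarith
  have hder : ∀ x : ℝ, 0 < x → HasDerivAt φ (-(4 * x⁻¹) - (-(x ^ 2)⁻¹) + 3 * x ^ 2) x := by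
    intro x hx
    have h1 : HasDerivAt (fun y : ℝ => log y) x⁻¹ x := Real.hasDerivAt_log hx.ne'
    have h2 : HasDerivAt (fun y : ℝ => y⁻¹) (-(x ^ 2)⁻¹) x := by
      simpa using hasDerivAt_inv hx.ne'
    have h3 : HasDerivAt (fun y : ℝ => y ^ 3) (3 * x ^ 2) x := by
      simpa using hasDerivAt_pow 3 x
    exact ((h1.const_mul 4).neg.sub h2).add h3
  have hcont : ∀ a b : ℝ, 0 < a → ContinuousOn φ (Icc a b) := by
    intro a b ha x hx
    exact (hder x (lt_of_lt_of_le ha hx.1)).continuousAt.continuousWithinAt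
  rcases le_or_gt s (1/4) with hc1 | hc1
  · -- monotone on [exp(-2), 1/4], value at left end nonneg
    have mono : MonotoneOn φ (Icc (exp (-2)) (1/4)) := by
      apply monotoneOn_of_deriv_nonneg (convex_Icc _ _) (hcont _ _ (exp_pos _))
      · intro x hx
        rw [interior_Icc] at hx
        exact (hder x (lt_trans (exp_pos _) hx.1)).differentiableAt.differentiableWithinAt
      · intro x hx
        rw [interior_Icc] at hx
        have hx0 : 0 < x := lt_trans (exp_pos _) hx.1
        rw [(hder x hx0).deriv]
        have hx4 : 4 * x ≤ 1 := by nlinarith [hx.2]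
        have heq : -(4 * x⁻¹) - (-(x ^ 2)⁻¹) + 3 * x ^ 2
            = (1 - 4 * x + 3 * x ^ 4) / x ^ 2 := by
          field_simp; ring
        rw [heq]
        have : (0:ℝ) ≤ 1 - 4 * x + 3 * x ^ 4 := by nlinarith [pow_pos hx0 4]
        positivity
    have hval : 0 ≤ φ (exp (-2)) := by
      have : φ (exp (-2)) = 8 - exp 2 + exp (-6) := by
        simp only [hφ]
        rw [log_exp, show ((exp (-2)):ℝ)^3 = exp (-6) by rw [← Real.exp_nat_mul]; norm_num,
          show ((exp (-2)):ℝ)⁻¹ = exp 2 by rw [exp_neg, inv_inv]]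
        ring
      rw [this]
      have := exp_two_lt
      have := exp_pos (-6)
      linarith
    calc (0:ℝ) ≤ φ (exp (-2)) := hval
      _ ≤ φ s := mono (left_mem_Icc.2 (by linarith [exp_neg_two_lt])) ⟨h1, hc1⟩ h1
  rcases le_or_gt s (3/10) with hc2 | hc2
  · -- direct estimate on [1/4, 3/10]
    have hlog : log s ≤ -1 := by
      have h10 : exp 1 ≤ 10/3 := by nlinarith [exp_one_lt_d9]
      have hs1 : s ≤ exp (-1) := by
        rw [exp_neg]
        calc s ≤ 3/10 := hc2
          _ = ((10:ℝ)/3)⁻¹ := by norm_num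
          _ ≤ (exp 1)⁻¹ := inv_anti₀ (exp_pos 1) h10
      calc log s ≤ log (exp (-1)) := Real.log_le_log hs0 hs1
        _ = -1 := log_exp _
    have hinv : s⁻¹ ≤ 4 := by
      calc s⁻¹ ≤ ((1:ℝ)/4)⁻¹ := inv_anti₀ (by norm_num) hc1.le
        _ = 4 := by norm_num
    simp only [hφ]
    nlinarith [pow_pos hs0 3]
  · -- antitone on [3/10, 1], value at right end 0
    have anti : AntitoneOn φ (Icc (3/10 : ℝ) 1) := by
      apply antitoneOn_of_deriv_nonpos (convex_Icc _ _) (hcont _ _ (by norm_num))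
      · intro x hx
        rw [interior_Icc] at hx
        exact (hder x (lt_trans (by norm_num) hx.1)).differentiableAt.differentiableWithinAt
      · intro x hx
        rw [interior_Icc] at hx
        have hx0 : (0:ℝ) < x := lt_trans (by norm_num) hx.1
        rw [(hder x hx0).deriv]
        have heq : -(4 * x⁻¹) - (-(x ^ 2)⁻¹) + 3 * x ^ 2
            = ((x - 1) * (3*x^3 + 3*x^2 + 3*x - 1)) / x ^ 2 := by
          field_simp; ring
        rw [heq]
        apply div_nonpos_of_nonpos_of_nonneg _ (sq_nonneg x)
        have h31 : (3:ℝ)/10 ≤ x := hx.1.le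
        have hcub : 0 ≤ 3*x^3 + 3*x^2 + 3*x - 1 := by nlinarith
        nlinarith [hx.2]
    have hval : φ 1 = 0 := by simp [hφ]
    have := anti ⟨hc2.le, h2⟩ (right_mem_Icc.2 (by norm_num)) h2
    rw [hval] at this
    exact this

lemma key_ineq {x : ℝ} (h1 : exp (-8) ≤ x) (h2 : x ≤ 1) :
    (1 - x) ^ 2 ≤ (log x) ^ 2 * x ^ (2⁻¹ : ℝ) := by
  have hx0 : (0:ℝ) < x := lt_of_lt_of_le (exp_pos _) h1
  set s : ℝ := x ^ (4⁻¹ : ℝ) with hs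
  have hs0 : 0 < s := rpow_pos_of_pos hx0 _
  have hs4 : s ^ (4:ℕ) = x := by
    rw [hs, ← Real.rpow_natCast (x ^ (4⁻¹:ℝ)) 4, ← Real.rpow_mul hx0.le]
    norm_num
  have hlogs : log s = 4⁻¹ * log x := by rw [hs, Real.log_rpow hx0]
  have hsle : s ≤ 1 := Real.rpow_le_one hx0.le h2 (by norm_num)
  have hsge : exp (-2) ≤ s := by
    have he : exp (-2) = (exp (-8)) ^ (4⁻¹:ℝ) := by
      rw [← Real.exp_mul]; norm_num
    rw [he, hs]
    exact Real.rpow_le_rpow (exp_pos _).le h1 (by norm_num)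
  have hphi := phi_nonneg hsge hsle
  have hmul : 1 - x ≤ -(log x) * s := by
    have hm := mul_le_mul_of_nonneg_left hphi hs0.le
    have e1 : s * (s⁻¹ - s ^ 3) = 1 - s ^ (4:ℕ) := by
      field_simp
    have e2 : s * (-(4 * log s)) = -(log x) * s := by rw [hlogs]; ring
    rw [e1, e2, hs4] at hm
    exact hm
  have h1x : 0 ≤ 1 - x := by linarith
  have hsq := pow_le_pow_left₀ h1x hmul 2
  have hs2 : s ^ (2:ℕ) = x ^ (2⁻¹:ℝ) := by
    rw [hs, ← Real.rpow_natCast (x ^ (4⁻¹:ℝ)) 2, ← Real.rpow_mul hx0.le]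
    norm_num
  calc (1-x)^2 ≤ (-(log x) * s)^2 := hsq
    _ = (log x)^2 * s^(2:ℕ) := by ring
    _ = (log x)^2 * x ^ (2⁻¹:ℝ) := by rw [hs2]

lemma tendsto_rpow_log_sq {d : ℝ} (hd : 0 < d) :
    Tendsto (fun x : ℝ => x ^ d * (log x) ^ 2) (nhdsWithin 0 (Ioi 0)) (nhds 0) := by
  have h := (tendsto_log_mul_rpow_nhdsGT_zero (by positivity : 0 < d/2)).pow 2
  rw [show ((0:ℝ)^2 : ℝ) = 0 by norm_num] at h
  apply h.congr'
  filter_upwards [self_mem_nhdsWithin] with x hx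
  have hx0 : (0:ℝ) < x := hx
  rw [mul_pow, ← Real.rpow_natCast (x ^ (d/2)) 2, ← Real.rpow_mul hx0.le]
  rw [show (d/2 * ((2:ℕ):ℝ) : ℝ) = d by push_cast; ring]
  ring

lemma B_cont {c : ℝ} (hc : 1 < c) :
    ContinuousOn (fun x : ℝ => x ^ (c-1) * (log x) ^ 2) (Icc (0:ℝ) 1) := by
  intro x hx
  rcases eq_or_lt_of_le hx.1 with h0 | h0
  · have hIoi : ContinuousWithinAt (fun x : ℝ => x ^ (c-1) * (log x) ^ 2) (Ioi 0) 0 := by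
      have h := tendsto_rpow_log_sq (show (0:ℝ) < c - 1 by linarith)
      unfold ContinuousWithinAt
      convert h using 2
      simp [Real.zero_rpow (show c-1 ≠ 0 by linarith)]
    rw [← h0]
    exact (continuousWithinAt_Ioi_iff_Ici.1 hIoi).mono Icc_subset_Ici_self
  · apply ContinuousWithinAt.mul
    · exact ((Real.continuousAt_rpow_const x (c-1) (Or.inl h0.ne')).continuousWithinAt)
    · exact ((Real.continuousAt_log h0.ne').continuousWithinAt).pow 2

lemma B_eval {c : ℝ} (hc : 1 < c) :
    IntegrableOn (fun x : ℝ => x ^ (c-1) * (log x) ^ 2) (Ioc (0:ℝ) 1) ∧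
    ∫ x in Ioc (0:ℝ) 1, x ^ (c-1) * (log x) ^ 2 = 2 / c ^ 3 := by
  have hc0 : (0:ℝ) < c := by linarith
  have hcne : c ≠ 0 := hc0.ne'
  have hcont := B_cont hc
  have hint : IntegrableOn (fun x : ℝ => x ^ (c-1) * (log x) ^ 2) (Icc (0:ℝ) 1) :=
    hcont.integrableOn_Icc
  refine ⟨hint.mono_set Ioc_subset_Icc_self, ?_⟩
  set F : ℝ → ℝ := fun x => x ^ c * ((log x)^2 / c - 2 * log x / c^2 + 2 / c^3) with hF
  have hF0 : F 0 = 0 := by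
    simp only [hF, Real.zero_rpow hcne]; ring
  have hF1 : F 1 = 2 / c^3 := by
    simp only [hF, Real.one_rpow, Real.log_one]; ring
  have hFderiv : ∀ x ∈ Ioo (0:ℝ) 1, HasDerivAt F (x ^ (c-1) * (log x)^2) x := by
    intro x hx
    have hx0 : (0:ℝ) < x := hx.1
    have hlog : HasDerivAt Real.log x⁻¹ x := Real.hasDerivAt_log hx0.ne'
    have h1 : HasDerivAt (fun y : ℝ => (log y)^2) (2 * log x * x⁻¹) x := by
      simpa using hlog.fun_pow 2
    have hG : HasDerivAt (fun y : ℝ => (log y)^2/c - 2*log y/c^2 + 2/c^3)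
        (2*log x*x⁻¹/c - 2*x⁻¹/c^2) x := by
      exact (((h1.div_const c).sub ((hlog.const_mul 2).div_const (c^2))).add_const _)
    have hrp : HasDerivAt (fun y : ℝ => y ^ c) (c * x ^ (c-1)) x :=
      Real.hasDerivAt_rpow_const (Or.inl hx0.ne')
    have hmul := hrp.fun_mul hG
    have hxc : x ^ c = x ^ (c-1) * x := by
      rw [← Real.rpow_add_one hx0.ne' (c-1)]; ring_nf
    refine hmul.congr_deriv ?_
    rw [hxc]
    field_simp
    ring
  have hFcont : ContinuousOn F (Icc (0:ℝ) 1) := by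
    intro x hx
    rcases eq_or_lt_of_le hx.1 with h0 | h0
    · have hIoi : ContinuousWithinAt F (Ioi 0) 0 := by
        unfold ContinuousWithinAt
        rw [hF0]
        have h1 := tendsto_rpow_log_sq hc0
        have h2 := tendsto_log_mul_rpow_nhdsGT_zero hc0
        have h3 : Tendsto (fun x : ℝ => x ^ c) (nhdsWithin 0 (Ioi 0)) (nhds 0) := by
          have h := (Real.continuousAt_rpow_const 0 c (Or.inr hc0.le)).continuousWithinAt
            (s := Ioi (0:ℝ))
          unfold ContinuousWithinAt at h
          convert h using 2
          simp [Real.zero_rpow hcne]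
        have hcomb := ((h1.div_const c).sub ((h2.const_mul 2).div_const (c^2))).add
          ((h3.const_mul 2).div_const (c^3))
        rw [show ((0:ℝ)/c - 2*0/c^2 + 2*0/c^3 : ℝ) = 0 by ring] at hcomb
        apply hcomb.congr'
        filter_upwards [self_mem_nhdsWithin] with x hx
        simp only [hF]
        ring
      rw [← h0]
      exact (continuousWithinAt_Ioi_iff_Ici.1 hIoi).mono Icc_subset_Ici_self
    · apply ContinuousWithinAt.mul
      · exact ((Real.continuousAt_rpow_const x c (Or.inl h0.ne')).continuousWithinAt)
      · apply ContinuousWithinAt.add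
        apply ContinuousWithinAt.sub
        · exact (((Real.continuousAt_log h0.ne').continuousWithinAt).pow 2).div_const _
        · exact (((Real.continuousAt_log h0.ne').continuousWithinAt).const_mul 2).div_const _
        · exact continuousWithinAt_const
  have hii : IntervalIntegrable (fun x : ℝ => x ^ (c-1) * (log x) ^ 2) volume 0 1 := by
    apply ContinuousOn.intervalIntegrable
    rwa [uIcc_of_le zero_le_one]
  have hftc := intervalIntegral.integral_eq_sub_of_hasDeriv_right_of_le zero_le_one hFcont
    (fun x hx => (hFderiv x hx).hasDerivWithinAt) hii
  rw [← intervalIntegral.integral_of_le zero_le_one, hftc, hF0, hF1, sub_zero]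

lemma C_eval {p : ℝ} (hp : 2 < p) :
    IntegrableOn (fun x : ℝ => x ^ (p-1) * (x ^ p - 1) ^ 2 * exp (-(x ^ p))) (Ioi (1:ℝ)) ∧
    ∫ x in Ioi (1:ℝ), x ^ (p-1) * (x ^ p - 1) ^ 2 * exp (-(x ^ p)) = 2 * exp (-1) / p := by
  have hp0 : (0:ℝ) < p := by linarith
  set G : ℝ → ℝ := fun x => -(1/p) * ((x ^ p) ^ 2 + 1) * exp (-(x ^ p)) with hG
  have hderiv : ∀ x ∈ Ici (1:ℝ), HasDerivAt G (x ^ (p-1) * (x ^ p - 1) ^ 2 * exp (-(x ^ p))) x := by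
    intro x hx
    have hx0 : (0:ℝ) < x := lt_of_lt_of_le one_pos hx
    have h1 : HasDerivAt (fun y : ℝ => y ^ p) (p * x ^ (p-1)) x :=
      Real.hasDerivAt_rpow_const (Or.inl hx0.ne')
    have h2 : HasDerivAt (fun y : ℝ => (y ^ p) ^ 2 + 1) (2 * x ^ p * (p * x ^ (p-1))) x := by
      simpa using (h1.pow 2).add_const 1
    have h3 : HasDerivAt (fun y : ℝ => exp (-(y ^ p))) (exp (-(x ^ p)) * (-(p * x ^ (p-1)))) x :=
      (h1.neg).exp
    have h4 := (h2.const_mul (-(1/p))).fun_mul h3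
    refine h4.congr_deriv ?_
    field_simp
    ring
  have hnonneg : ∀ x ∈ Ioi (1:ℝ), 0 ≤ x ^ (p-1) * (x ^ p - 1) ^ 2 * exp (-(x ^ p)) := by
    intro x hx
    have hx0 : (0:ℝ) < x := lt_trans one_pos hx
    positivity
  have htend : Tendsto G atTop (nhds 0) := by
    have h1 := tendsto_pow_mul_exp_neg_atTop_nhds_zero 2
    have h2 := tendsto_exp_neg_atTop_nhds_zero
    have hT : Tendsto (fun t : ℝ => -(1/p) * (t ^ 2 + 1) * exp (-t)) atTop (nhds 0) := by
      have h3 := (h1.add h2).const_mul (-(1/p))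
      rw [show (-(1/p) * ((0:ℝ) + 0) : ℝ) = 0 by ring] at h3
      apply h3.congr
      intro t; ring
    have hrp := tendsto_rpow_atTop hp0
    have hcomp := hT.comp hrp
    apply hcomp.congr
    intro x
    simp only [hG, Function.comp]
  have hint := integrableOn_Ioi_deriv_of_nonneg' hderiv hnonneg htend
  have hval := integral_Ioi_of_hasDerivAt_of_nonneg' hderiv hnonneg htend
  refine ⟨hint, ?_⟩
  rw [hval, hG]
  simp only [Real.one_rpow]
  ring

lemma Gamma_lower {s : ℝ} (hs0 : 0 < s) (hs1 : s ≤ 1) : 1 - exp (-1) ≤ Real.Gamma s := by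
  rw [Real.Gamma_eq_integral hs0]
  have hint : IntegrableOn (fun x : ℝ => exp (-x) * x ^ (s-1)) (Ioi 0) :=
    Real.GammaIntegral_convergent hs0
  have h1 : ∫ x in Ioc (0:ℝ) 1, exp (-x) = 1 - exp (-1) := by
    rw [← intervalIntegral.integral_of_le zero_le_one]
    have hd : ∀ x ∈ uIcc (0:ℝ) 1, HasDerivAt (fun y : ℝ => -exp (-y)) (exp (-x)) x := by
      intro x _
      simpa using ((hasDerivAt_neg x).exp).fun_neg
    rw [intervalIntegral.integral_eq_sub_of_hasDerivAt hd
      ((continuous_neg.rexp.intervalIntegrable) 0 1)]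
    simp
    ring
  have h2 : ∫ x in Ioc (0:ℝ) 1, exp (-x) ≤ ∫ x in Ioc (0:ℝ) 1, exp (-x) * x ^ (s-1) := by
    apply setIntegral_mono_on (continuous_neg.rexp.integrableOn_Ioc)
      (hint.mono_set Ioc_subset_Ioi_self) measurableSet_Ioc
    intro x hx
    nth_rewrite 1 [← mul_one (exp (-x))]
    exact mul_le_mul_of_nonneg_left
      (Real.one_le_rpow_of_pos_of_le_one_of_nonpos hx.1 hx.2 (by linarith)) (exp_pos _).le
  have h3 : ∫ x in Ioc (0:ℝ) 1, exp (-x) * x ^ (s-1) ≤ ∫ x in Ioi (0:ℝ), exp (-x) * x ^ (s-1) := by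
    apply setIntegral_mono_set hint
    · rw [EventuallyLE, ae_restrict_iff' measurableSet_Ioi]
      filter_upwards with x hx
      have hx0 : (0:ℝ) < x := hx
      positivity
    · exact HasSubset.Subset.eventuallyLE Ioc_subset_Ioi_self
  linarith

lemma main_bound {p : ℝ} (hp : 2 < p) :
    ∫ x in Ioi (0:ℝ), (x - 1) ^ 2 * x ^ (p-2) * exp (-(x ^ p)) ≤ 5.52 * (p⁻¹) ^ 3 := by
  have hp0 : (0:ℝ) < p := by linarith
  have hpne : p ≠ 0 := hp0.ne'
  set r : ℝ := exp (-8) with hr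
  have hr0 : 0 < r := exp_pos _
  have hr1 : r < 1 := by
    rw [hr, show (1:ℝ) = exp 0 by rw [exp_zero]]
    exact exp_lt_exp.2 (by norm_num)
  set base : ℝ → ℝ := fun x => (x - 1) ^ 2 * x ^ (p-2) * exp (-(x ^ p)) with hbase
  -- continuity on Ici 0
  have hcontRpow : ∀ (e : ℝ), 0 ≤ e → ContinuousOn (fun x : ℝ => x ^ e) (Ici (0:ℝ)) := by
    intro e he x _
    exact (Real.continuousAt_rpow_const x e (Or.inr he)).continuousWithinAt
  have hcont : ContinuousOn base (Ici (0:ℝ)) := by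
    apply ContinuousOn.mul
    · apply ContinuousOn.mul
      · exact (((continuous_id.sub continuous_const).pow 2)).continuousOn
      · exact hcontRpow _ (by linarith)
    · exact Real.continuous_exp.comp_continuousOn ((hcontRpow _ (by linarith)).neg)
  have hint01 : IntegrableOn base (Icc 0 1) :=
    (hcont.mono Icc_subset_Ici_self).integrableOn_Icc
  have hint0r : IntegrableOn base (Ioc 0 r) :=
    hint01.mono_set (fun x hx => ⟨hx.1.le, le_trans hx.2 hr1.le⟩)
  have hintr1 : IntegrableOn base (Ioc r 1) :=
    hint01.mono_set (fun x hx => ⟨(lt_trans hr0 hx.1).le, hx.2⟩)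
  -- piece 3 setup
  obtain ⟨hCint, hCval⟩ := C_eval hp
  set D : ℝ → ℝ := fun x => (p⁻¹)^2 * (x ^ (p-1) * (x ^ p - 1)^2 * exp (-(x ^ p))) with hD
  have hDint : IntegrableOn D (Ioi 1) := hCint.const_mul _
  have hdom : ∀ x ∈ Ioi (1:ℝ), base x ≤ D x := by
    intro x hx
    have hx1 : (1:ℝ) ≤ x := le_of_lt hx
    have hx0 : (0:ℝ) < x := by linarith
    have hb : 1 + p * (x - 1) ≤ (1 + (x-1)) ^ p :=
      one_add_mul_self_le_rpow_one_add (by linarith) (by linarith)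
    rw [show (1 + (x-1) : ℝ) = x by ring] at hb
    have h5 : x - 1 ≤ p⁻¹ * (x ^ p - 1) := by
      have h := mul_le_mul_of_nonneg_left (show p*(x-1) ≤ x^p - 1 by linarith)
        (inv_nonneg.2 hp0.le)
      rwa [← mul_assoc, inv_mul_cancel₀ hpne, one_mul] at h
    have hsq : (x-1)^2 ≤ (p⁻¹)^2 * (x^p - 1)^2 := by
      have h6 : (0:ℝ) ≤ x - 1 := by linarith
      calc (x-1)^2 ≤ (p⁻¹ * (x^p-1))^2 := pow_le_pow_left₀ h6 h5 2
        _ = (p⁻¹)^2*(x^p-1)^2 := by ring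
    have hxp : x ^ (p-2) ≤ x ^ (p-1) :=
      Real.rpow_le_rpow_of_exponent_le hx1 (by linarith)
    have hrpnn : (0:ℝ) ≤ x ^ (p-1) := (Real.rpow_pos_of_pos hx0 _).le
    calc base x = (x-1)^2 * x^(p-2) * exp (-(x^p)) := rfl
      _ ≤ ((p⁻¹)^2 * (x^p-1)^2) * x^(p-1) * exp (-(x^p)) := by
          apply mul_le_mul_of_nonneg_right _ (exp_pos _).le
          apply mul_le_mul hsq hxp (Real.rpow_pos_of_pos hx0 _).le (by positivity)
      _ = D x := by rw [hD]; ring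
  have hbmeas : AEStronglyMeasurable base (volume.restrict (Ioi (1:ℝ))) := by
    apply ContinuousOn.aestronglyMeasurable _ measurableSet_Ioi
    exact hcont.mono (fun x hx => (le_of_lt (lt_trans one_pos hx) : (0:ℝ) ≤ x))
  have hbint1 : IntegrableOn base (Ioi (1:ℝ)) := by
    apply MeasureTheory.Integrable.mono hDint hbmeas
    refine (ae_restrict_iff' measurableSet_Ioi).2 ?_
    filter_upwards with x hx
    have hx0 : (0:ℝ) < x := lt_trans one_pos hx
    have h1 : 0 ≤ base x := by rw [hbase]; positivity
    have h2 : 0 ≤ D x := by rw [hD]; positivity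
    rw [Real.norm_eq_abs, Real.norm_eq_abs, abs_of_nonneg h1, abs_of_nonneg h2]
    exact hdom x hx
  -- splitting
  have hsplit1 : ∫ x in Ioi (0:ℝ), base x
      = (∫ x in Ioc (0:ℝ) 1, base x) + ∫ x in Ioi (1:ℝ), base x := by
    rw [← setIntegral_union (Ioc_disjoint_Ioi le_rfl) measurableSet_Ioi
      (hint01.mono_set Ioc_subset_Icc_self) hbint1, Ioc_union_Ioi_eq_Ioi zero_le_one]
  have hsplit2 : ∫ x in Ioc (0:ℝ) 1, base x
      = (∫ x in Ioc (0:ℝ) r, base x) + ∫ x in Ioc r 1, base x := by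
    rw [← setIntegral_union (Ioc_disjoint_Ioc_of_le le_rfl) measurableSet_Ioc hint0r hintr1,
      Ioc_union_Ioc_eq_Ioc hr0.le hr1.le]
  -- piece 1
  have hrpowint : IntegrableOn (fun x : ℝ => x ^ (p-2)) (Ioc 0 r) := by
    have := intervalIntegrable_rpow' (a := 0) (b := r) (show (-1:ℝ) < p - 2 by linarith)
    rwa [intervalIntegrable_iff_integrableOn_Ioc_of_le hr0.le] at this
  have hA : ∫ x in Ioc (0:ℝ) r, base x ≤ 1/32 * (p⁻¹)^3 := by
    have hmono : ∫ x in Ioc (0:ℝ) r, base x ≤ ∫ x in Ioc (0:ℝ) r, x ^ (p-2) := by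
      apply setIntegral_mono_on hint0r hrpowint measurableSet_Ioc
      intro x hx
      have hx0 : (0:ℝ) < x := hx.1
      have hxr : x ≤ r := hx.2
      have h1 : (x-1)^2 ≤ 1 := by nlinarith
      have h2 : exp (-(x^p)) ≤ 1 := by
        rw [show (1:ℝ) = exp 0 by rw [exp_zero]]
        exact exp_le_exp.2 (by simpa using (Real.rpow_pos_of_pos hx0 p).le)
      have hrnn : (0:ℝ) ≤ x ^ (p-2) := (Real.rpow_pos_of_pos hx0 _).le
      calc base x = (x-1)^2 * x^(p-2) * exp (-(x^p)) := rfl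
        _ ≤ (1 * x^(p-2)) * 1 := by
            apply mul_le_mul _ h2 (exp_pos _).le (by positivity)
            exact mul_le_mul_of_nonneg_right h1 hrnn
        _ = x ^ (p-2) := by ring
    have hval : ∫ x in Ioc (0:ℝ) r, x ^ (p-2) = r ^ (p-1) / (p-1) := by
      rw [← intervalIntegral.integral_of_le hr0.le,
        integral_rpow (Or.inl (by linarith : (-1:ℝ) < p - 2)),
        Real.zero_rpow (by intro h; linarith [h] : p - 2 + 1 ≠ 0)]
      rw [show p - 2 + 1 = p - 1 by ring]
      ring
    have he : exp (-(p-1)) ≤ p⁻¹ := by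
      have h7 : p ≤ exp (p-1) := by linarith [add_one_le_exp (p-1)]
      rw [exp_neg]
      exact inv_anti₀ hp0 h7
    have h8 : r ^ (p-1) = exp (-(p-1)) ^ (8:ℕ) := by
      rw [hr, ← Real.exp_mul, ← Real.exp_nat_mul]
      ring_nf
    have h9 : r ^ (p-1) ≤ (p⁻¹)^(8:ℕ) := by
      rw [h8]
      exact pow_le_pow_left₀ (exp_pos _).le he 8
    have h10 : r ^ (p-1) / (p-1) ≤ (p⁻¹)^(8:ℕ) := by
      apply le_trans (div_le_self (Real.rpow_pos_of_pos hr0 _).le (by linarith)) h9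
    have h11 : (p⁻¹)^(8:ℕ) ≤ 1/32 * (p⁻¹)^3 := by
      have hinv : p⁻¹ ≤ 1/2 := by
        rw [show (1:ℝ)/2 = (2:ℝ)⁻¹ by norm_num]
        exact inv_anti₀ (by norm_num) (by linarith)
      have h12 : (p⁻¹)^(5:ℕ) ≤ (1/2:ℝ)^(5:ℕ) := pow_le_pow_left₀ (by positivity) hinv 5
      calc (p⁻¹)^(8:ℕ) = (p⁻¹)^(5:ℕ) * (p⁻¹)^(3:ℕ) := by ring
        _ ≤ (1/2:ℝ)^(5:ℕ) * (p⁻¹)^(3:ℕ) := by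
            apply mul_le_mul_of_nonneg_right h12 (by positivity)
        _ = 1/32 * (p⁻¹)^3 := by norm_num
    linarith [hmono, hval ▸ hmono]
  -- piece 2
  have hcgt : (1:ℝ) < p - 1/2 := by linarith
  obtain ⟨hBint, hBval⟩ := B_eval hcgt
  have hB : ∫ x in Ioc r 1, base x ≤ 128/27 * (p⁻¹)^3 := by
    have hmono : ∫ x in Ioc r 1, base x
        ≤ ∫ x in Ioc r 1, x ^ (p - 1/2 - 1) * (log x)^2 := by
      apply setIntegral_mono_on hintr1
        (hBint.mono_set (fun x hx => ⟨lt_trans hr0 hx.1, hx.2⟩)) measurableSet_Ioc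
      intro x hx
      have hx0 : (0:ℝ) < x := lt_trans hr0 hx.1
      have hk := key_ineq hx.1.le hx.2
      have h2 : exp (-(x^p)) ≤ 1 := by
        rw [show (1:ℝ) = exp 0 by rw [exp_zero]]
        exact exp_le_exp.2 (by simpa using (Real.rpow_pos_of_pos hx0 p).le)
      have hre : x ^ (2⁻¹:ℝ) * x ^ (p-2) = x ^ (p - 1/2 - 1) := by
        rw [← Real.rpow_add hx0]
        congr 1
        norm_num
        ring
      have hrnn : (0:ℝ) ≤ x ^ (p-2) := (Real.rpow_pos_of_pos hx0 _).le
      calc base x = (x-1)^2 * x^(p-2) * exp (-(x^p)) := rfl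
        _ ≤ (x-1)^2 * x^(p-2) * 1 := by
            apply mul_le_mul_of_nonneg_left h2 (by positivity)
        _ = (1-x)^2 * x^(p-2) := by ring
        _ ≤ ((log x)^2 * x ^ (2⁻¹:ℝ)) * x^(p-2) := mul_le_mul_of_nonneg_right hk hrnn
        _ = (x ^ (2⁻¹:ℝ) * x ^ (p-2)) * (log x)^2 := by ring
        _ = x ^ (p-1/2-1) * (log x)^2 := by rw [hre]
    have hmono2 : ∫ x in Ioc r 1, x ^ (p-1/2-1) * (log x)^2
        ≤ ∫ x in Ioc (0:ℝ) 1, x ^ (p-1/2-1) * (log x)^2 := by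
      apply setIntegral_mono_set hBint
      · rw [EventuallyLE, ae_restrict_iff' measurableSet_Ioc]
        filter_upwards with x hx
        have hx0 : (0:ℝ) < x := hx.1
        positivity
      · exact HasSubset.Subset.eventuallyLE (fun x hx => ⟨lt_trans hr0 hx.1, hx.2⟩)
    rw [hBval] at hmono2
    have hc0 : (0:ℝ) < p - 1/2 := by linarith
    have hnum : 2/(p-1/2)^3 ≤ 128/27 * (p⁻¹)^3 := by
      have h34 : 3/4 * p ≤ p - 1/2 := by linarith
      have hcube : (3/4*p)^3 ≤ (p-1/2)^3 := pow_le_pow_left₀ (by positivity) h34 3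
      have h1 : 2/(p-1/2)^3 ≤ 2/((3/4*p)^3) :=
        div_le_div_of_nonneg_left (by norm_num) (by positivity) hcube
      have h2 : (2:ℝ)/((3/4*p)^3) = 128/27 * (p⁻¹)^3 := by
        field_simp
        ring
      linarith
    linarith
  -- piece 3
  have hC : ∫ x in Ioi (1:ℝ), base x ≤ 2 * exp (-1) * (p⁻¹)^3 := by
    have hm : ∫ x in Ioi (1:ℝ), base x ≤ ∫ x in Ioi (1:ℝ), D x :=
      setIntegral_mono_on hbint1 hDint measurableSet_Ioi hdom
    have hDval : ∫ x in Ioi (1:ℝ), D x = (p⁻¹)^2 * (2 * exp (-1) / p) := by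
      rw [hD]
      rw [MeasureTheory.integral_const_mul]
      rw [hCval]
    have heq : (p⁻¹)^2 * (2*exp (-1)/p) = 2*exp (-1) * (p⁻¹)^3 := by
      field_simp
    rw [hDval, heq] at hm
    exact hm
  -- final sum
  have hexp1 : exp (-1) ≤ 0.37 := by
    have h := exp_one_gt_d9
    have hmul : exp (-1) * exp 1 = 1 := by rw [← exp_add]; norm_num
    nlinarith [exp_pos (-1)]
  rw [hsplit1, hsplit2]
  have hp3 : (0:ℝ) < (p⁻¹)^3 := by positivity
  have hnum : 1/32 * (p⁻¹)^3 + 128/27 * (p⁻¹)^3 + 2*exp (-1) * (p⁻¹)^3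
      ≤ 5.52 * (p⁻¹)^3 := by
    have h1 : (1/32 + 128/27 + 2*exp (-1) : ℝ) ≤ 5.52 := by
      have : (1/32 + 128/27 : ℝ) ≤ 4.78 := by norm_num
      linarith
    nlinarith [hp3.le]
  linarith

theorem coupling_bound (q : ℝ) (hq₁ : 1 < q) (hq₂ : q < 2) :
    ∫ x : ℝ,
        |x - Real.sign x| ^ 2 *
          ((2 * (q - 1) * Real.Gamma (1 + 1 / q))⁻¹ * |x| ^ ((2 - q) / (q - 1)) *
            Real.exp (-(|x| ^ (q / (q - 1)))))
      ≤ 9 * (1 - 1 / q) ^ 2 := by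
  have hq0 : (0:ℝ) < q := by linarith
  have hq1 : (0:ℝ) < q - 1 := by linarith
  set ε : ℝ := (q-1)/q with hε
  have hε0 : 0 < ε := div_pos hq1 hq0
  set p : ℝ := q / (q-1) with hp
  have hp2 : 2 < p := by
    rw [hp, lt_div_iff₀ hq1]
    linarith
  have hα : (2 - q)/(q - 1) = p - 2 := by
    rw [hp]; field_simp; ring
  have hpinv : p⁻¹ = ε := by rw [hp, hε, inv_div]
  have hΓpos : 0 < Real.Gamma (1/q) := Real.Gamma_pos_of_pos (by positivity)
  have hGadd : Real.Gamma (1 + 1/q) = (1/q) * Real.Gamma (1/q) := by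
    rw [add_comm]; exact Real.Gamma_add_one (show (1:ℝ)/q ≠ 0 by positivity)
  set γ : ℝ := 2*(q-1)*Real.Gamma (1 + 1/q) with hγ
  have hγval : γ = 2 * ε * Real.Gamma (1/q) := by
    rw [hγ, hGadd, hε]; field_simp
  have hγpos : 0 < γ := by rw [hγval]; positivity
  set f : ℝ → ℝ := fun y => (y - 1)^2 * (γ⁻¹ * y ^ (p - 2) * exp (-(y ^ p))) with hf
  simp only [hα]
  have hstep : (∫ x : ℝ, |x - Real.sign x| ^ 2
        * (γ⁻¹ * |x| ^ (p-2) * exp (-(|x| ^ p))))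
      = 2 * ∫ y in Ioi (0:ℝ), f y := by
    rw [← integral_comp_abs (f := f)]
    congr 1
    funext x
    rw [hf]
    rcases lt_trichotomy x 0 with hx | hx | hx
    · rw [Real.sign_of_neg hx]
      have h1 : |x - (-1)|^2 = (|x| - 1)^2 := by
        rw [abs_of_neg hx, sq_abs]; ring
      rw [h1]
    · subst hx
      rw [Real.sign_zero]
      simp [Real.zero_rpow (show p - 2 ≠ 0 by intro h; linarith)]
    · rw [Real.sign_of_pos hx, abs_of_pos hx, sq_abs]
  rw [hstep]
  have hfact : ∀ y : ℝ, f y = γ⁻¹ * ((y-1)^2 * y ^ (p-2) * exp (-(y ^ p))) := by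
    intro y; rw [hf]; ring
  simp only [hfact]
  rw [MeasureTheory.integral_const_mul]
  have hI := main_bound hp2
  rw [hpinv] at hI
  have hexp1 : exp (-1) ≤ 0.37 := by
    have h := exp_one_gt_d9
    have hmul : exp (-1) * exp 1 = 1 := by rw [← exp_add]; norm_num
    nlinarith [exp_pos (-1)]
  have hΓlow : 1 - exp (-1) ≤ Real.Gamma (1/q) :=
    Gamma_lower (by positivity) (by rw [div_le_one hq0]; linarith)
  have hq1q : (1 : ℝ) - 1/q = ε := by rw [hε]; field_simp
  calc 2 * (γ⁻¹ * ∫ x in Ioi (0:ℝ), (x-1)^2 * x ^ (p-2) * exp (-(x ^ p)))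
      ≤ 2 * (γ⁻¹ * (5.52 * ε^3)) := by
        apply mul_le_mul_of_nonneg_left _ (by norm_num)
        exact mul_le_mul_of_nonneg_left hI (inv_nonneg.2 hγpos.le)
    _ = 5.52 * ε^2 / Real.Gamma (1/q) := by
        rw [hγval]
        field_simp
    _ ≤ 9 * ε^2 := by
        rw [div_le_iff₀ hΓpos]
        nlinarith [sq_nonneg ε, hε0.le]
    _ = 9 * (1 - 1/q)^2 := by rw [hq1q]
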